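/- Every element η ∈ Λ^{n+1}((ℝ^{2n+1})^*) lying in the span of the forms dx_I ∧ dy_J with |I| + |J| = n+1 (i.e. containing no components with dt) can be written uniquely as η = ω' ∧ δ, where ω' = 4∑_{j=1}^n dx_j ∧ dy_j and δ ∈ Λ^{n−1}((ℝ^{2n+1})^*) lies in the span of the forms dx_{I'} ∧ dy_{J'} with |I'| + |J'| = n−1 (i.e. δ contains no components with dt). -/

import Mathlib

/-!
Statement 9: every `η ∈ Λ^{n+1}((ℝ^{2n+1})^*)` lying in the span of the
products `dx_I ∧ dy_J` with `|I| + |J| = n+1` (no components with `dt`) can be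
written uniquely as `η = ω' ∧ δ`, where `ω' = 4∑_{j=1}^n dx_j ∧ dy_j` and
`δ ∈ Λ^{n-1}((ℝ^{2n+1})^*)` lies in the span of the products `dx_{I'} ∧ dy_{J'}`
with `|I'| + |J'| = n-1` (no components with `dt`).

Here `Λ^k((ℝ^{2n+1})^*)` is modelled via the exterior algebra of the dual space
`Module.Dual ℝ (Fin (2n+1) → ℝ)`, the wedge product being the multiplication of
the exterior algebra.
-/

set_option synthInstance.maxHeartbeats 1000000
set_option maxHeartbeats 1000000

noncomputable section

/-- The dual of `ℝ^{2n+1}`. -/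
abbrev DualW (n : ℕ) := Module.Dual ℝ (Fin (2 * n + 1) → ℝ)

/-- Index of the coordinate `x_j` in `ℝ^{2n+1}`. -/
def xIdx (n : ℕ) (j : Fin n) : Fin (2 * n + 1) := ⟨j.1, by have := j.2; omega⟩

/-- Index of the coordinate `y_j` in `ℝ^{2n+1}`. -/
def yIdx (n : ℕ) (j : Fin n) : Fin (2 * n + 1) := ⟨n + j.1, by have := j.2; omega⟩

/-- Index of the coordinate `t` in `ℝ^{2n+1}`. -/
def tIdx (n : ℕ) : Fin (2 * n + 1) := ⟨2 * n, by omega⟩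

/-- The covector `dx_j` in the exterior algebra of the dual of `ℝ^{2n+1}`. -/
def dX (n : ℕ) (j : Fin n) : ExteriorAlgebra ℝ (DualW n) :=
  ExteriorAlgebra.ι ℝ (LinearMap.proj (xIdx n j))

/-- The covector `dy_j` in the exterior algebra of the dual of `ℝ^{2n+1}`. -/
def dY (n : ℕ) (j : Fin n) : ExteriorAlgebra ℝ (DualW n) :=
  ExteriorAlgebra.ι ℝ (LinearMap.proj (yIdx n j))

/-- The covector `dt` in the exterior algebra of the dual of `ℝ^{2n+1}`. -/
def dT (n : ℕ) : ExteriorAlgebra ℝ (DualW n) :=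
  ExteriorAlgebra.ι ℝ (LinearMap.proj (tIdx n))

/-- `dx_I = dx_{i_1} ∧ … ∧ dx_{i_k}` for `I = (i_1 < … < i_k)`; similarly `dy_J`. -/
def wedgeOf (n : ℕ) (g : Fin n → ExteriorAlgebra ℝ (DualW n)) (I : Finset (Fin n)) :
    ExteriorAlgebra ℝ (DualW n) :=
  ((I.sort (· ≤ ·)).map g).prod

/-- The span of the products `dx_I ∧ dy_J` with `|I| + |J| = k`, i.e. the
`k`-covectors containing no components with `dt`. -/
def horiz (n k : ℕ) : Submodule ℝ (ExteriorAlgebra ℝ (DualW n)) :=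
  Submodule.span ℝ {z | ∃ I J : Finset (Fin n),
    I.card + J.card = k ∧ z = wedgeOf n (dX n) I * wedgeOf n (dY n) J}

/-- The form `ω' = 4∑_{j=1}^n dx_j ∧ dy_j`. -/
def omega' (n : ℕ) : ExteriorAlgebra ℝ (DualW n) :=
  (4 : ℝ) • ∑ j : Fin n, dX n j * dY n j

namespace S9

variable {n : ℕ}

abbrev E (n : ℕ) := ExteriorAlgebra ℝ (DualW n)

def gen (n : ℕ) (i : Fin (2 * n + 1)) : E n := ExteriorAlgebra.ι ℝ (LinearMap.proj i)

def P (n : ℕ) (l : List (Fin (2 * n + 1))) : E n := (l.map (gen n)).prod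

lemma P_nil : P n [] = 1 := rfl
lemma P_cons (a : Fin (2 * n + 1)) (l) : P n (a :: l) = gen n a * P n l := by
  simp [P]
lemma P_append (l₁ l₂) : P n (l₁ ++ l₂) = P n l₁ * P n l₂ := by
  simp [P]

lemma gen_swap (i j : Fin (2 * n + 1)) : gen n i * gen n j = -(gen n j * gen n i) :=
  eq_neg_of_add_eq_zero_left (ExteriorAlgebra.ι_add_mul_swap _ _)

lemma gen_sq (i : Fin (2 * n + 1)) : gen n i * gen n i = 0 := ExteriorAlgebra.ι_sq_zero _

lemma gen_comm_pair (a i i' : Fin (2 * n + 1)) :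
    gen n a * (gen n i * gen n i') = (gen n i * gen n i') * gen n a := by
  calc gen n a * (gen n i * gen n i') = (gen n a * gen n i) * gen n i' := by rw [mul_assoc]
    _ = (-(gen n i * gen n a)) * gen n i' := by rw [gen_swap]
    _ = -(gen n i * (gen n a * gen n i')) := by rw [neg_mul, mul_assoc]
    _ = -(gen n i * (-(gen n i' * gen n a))) := by rw [gen_swap a i']
    _ = (gen n i * gen n i') * gen n a := by rw [mul_neg, neg_neg, mul_assoc]

lemma pair_comm_P (l) (i i' : Fin (2 * n + 1)) :
    (gen n i * gen n i') * P n l = P n l * (gen n i * gen n i') := by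
  induction l with
  | nil => simp [P_nil]
  | cons a t ih =>
      rw [P_cons, ← mul_assoc, ← gen_comm_pair, mul_assoc, ih, mul_assoc]

lemma P_perm {l l' : List (Fin (2 * n + 1))} (h : l.Perm l') :
    P n l' = P n l ∨ P n l' = -P n l := by
  induction h with
  | nil => exact Or.inl rfl
  | cons a _ ih =>
      rcases ih with h1 | h1
      · exact Or.inl (by rw [P_cons, P_cons, h1])
      · exact Or.inr (by rw [P_cons, P_cons, h1, mul_neg])
  | swap a b t =>
      exact Or.inr (by rw [P_cons, P_cons, P_cons, P_cons, ← mul_assoc, ← mul_assoc,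
        gen_swap b a, neg_mul, neg_neg])
  | trans _ _ ih1 ih2 =>
      rcases ih1 with e1 | e1 <;> rcases ih2 with e2 | e2 <;>
        simp [e2, e1, neg_neg] <;> tauto

def ev (n : ℕ) (i : Fin (2 * n + 1)) : Module.Dual ℝ (DualW n) :=
  Module.Dual.eval ℝ _ (Pi.single i 1)

lemma ev_proj (i j : Fin (2 * n + 1)) :
    ev n i (LinearMap.proj j) = if j = i then 1 else 0 := by
  simp [ev, Module.Dual.eval, Pi.single_apply]

def Cmap (n : ℕ) : List (Fin (2 * n + 1)) → (E n →ₗ[ℝ] E n)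
  | [] => LinearMap.id
  | a :: l => (Cmap n l).comp (CliffordAlgebra.contractLeft (ev n a))

lemma Cmap_nil (x : E n) : Cmap n [] x = x := rfl
lemma Cmap_cons (a l) (x : E n) :
    Cmap n (a :: l) x = Cmap n l (CliffordAlgebra.contractLeft (ev n a) x) := rfl

lemma contract_gen_mul (i : Fin (2 * n + 1)) (a : Fin (2 * n + 1)) (x : E n) :
    CliffordAlgebra.contractLeft (ev n i) (gen n a * x)
      = (if a = i then (1:ℝ) else 0) • x - gen n a * CliffordAlgebra.contractLeft (ev n i) x := by
  rw [show gen n a = CliffordAlgebra.ι (0 : QuadraticForm ℝ (DualW n)) (LinearMap.proj a) from rfl,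
    CliffordAlgebra.contractLeft_ι_mul, ev_proj]

lemma contract_P_not_mem (i : Fin (2 * n + 1)) (l) (h : i ∉ l) :
    CliffordAlgebra.contractLeft (ev n i) (P n l) = 0 := by
  induction l with
  | nil => simpa [P_nil] using CliffordAlgebra.contractLeft_one
  | cons a t ih =>
      have hai : a ≠ i := fun e => h (e ▸ List.mem_cons_self)
      rw [P_cons, contract_gen_mul, if_neg hai, ih (fun hm => h (List.mem_cons_of_mem _ hm))]
      simp

lemma Cmap_gen_mul (l) (i : Fin (2 * n + 1)) (h : i ∉ l) (x : E n) :
    Cmap n l (gen n i * x) = ((-1:ℝ)) ^ l.length • (gen n i * Cmap n l x) := by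
  induction l generalizing x with
  | nil => simp [Cmap_nil]
  | cons a t ih =>
      have hia : i ≠ a := fun e => h (e ▸ List.mem_cons_self)
      rw [Cmap_cons, contract_gen_mul, if_neg hia, zero_smul, zero_sub, map_neg,
        ih (fun hm => h (List.mem_cons_of_mem _ hm)), Cmap_cons]
      simp [pow_succ, mul_smul]

lemma algebraMapInv_gen (i : Fin (2 * n + 1)) :
    ExteriorAlgebra.algebraMapInv (gen n i) = 0 := by
  simp [gen, ExteriorAlgebra.algebraMapInv]

lemma ortho (s t : List (Fin (2 * n + 1))) (hs : s.Pairwise (· < ·)) (ht : t.Pairwise (· < ·))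
    (hlen : s.length = t.length) :
    ExteriorAlgebra.algebraMapInv (Cmap n s (P n t)) = if s = t then 1 else 0 := by
  induction s generalizing t with
  | nil =>
      cases t with
      | nil => simp [Cmap_nil, P_nil]
      | cons b t' => simp at hlen
  | cons a s' ih =>
      cases t with
      | nil => simp at hlen
      | cons b t' =>
          have hs' : s'.Pairwise (· < ·) := hs.of_cons
          have ht' : t'.Pairwise (· < ·) := ht.of_cons
          have hlen' : s'.length = t'.length := by simpa using hlen
          rcases lt_trichotomy a b with hab | hab | hab
          · -- a < b : a ∉ t, result 0, and lists differ
            have hat : a ∉ (b :: t') := by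
              intro hm
              rcases List.mem_cons.mp hm with rfl | hm
              · exact lt_irrefl a hab
              · exact absurd (hab.trans (List.rel_of_pairwise_cons ht hm)) (lt_irrefl a)
            rw [Cmap_cons, contract_P_not_mem _ _ hat, map_zero, map_zero,
              if_neg (by intro e; exact hat (e ▸ List.mem_cons_self))]
          · -- a = b
            subst hab
            have hat' : a ∉ t' := fun hm => absurd (List.rel_of_pairwise_cons ht hm) (lt_irrefl a)
            rw [Cmap_cons, P_cons, contract_gen_mul, if_pos rfl, one_smul,
              contract_P_not_mem _ _ hat', mul_zero, sub_zero, ih t' hs' ht' hlen']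
            by_cases h : s' = t' <;> simp [h]
          · -- b < a : b ∉ (a :: s'), reduce to gen b * _, killed by algebraMapInv
            have hbs : b ∉ s' := by
              intro hm
              exact absurd (hab.trans (List.rel_of_pairwise_cons hs hm)) (lt_irrefl b)
            have hba : ¬ (b = a) := fun e => absurd (e ▸ hab) (lt_irrefl b)
            rw [Cmap_cons, P_cons, contract_gen_mul, if_neg hba, zero_smul, zero_sub, map_neg,
              Cmap_gen_mul _ _ hbs, if_neg (by intro e; cases e; exact lt_irrefl a hab)]
            rw [map_neg, map_smul, map_mul, algebraMapInv_gen]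
            simp

/-! ### Patterns -/

abbrev Pat (n : ℕ) := Fin n → Fin 4
abbrev Mdl (n : ℕ) := Pat n → ℝ

lemma update_self_of_eq {α β : Type*} [DecidableEq α] {f : α → β} {a : α} {b : β}
    (h : f a = b) : Function.update f a b = f := by
  subst h; exact Function.update_eq_self a f

def wt : Fin 4 → ℕ := ![0, 1, 1, 2]

def w (n : ℕ) (p : Pat n) : ℕ := ∑ j, wt (p j)

def idxF (n : ℕ) (j : Fin n) : Fin 4 → List (Fin (2 * n + 1)) :=
  ![[], [xIdx n j], [yIdx n j], [xIdx n j, yIdx n j]]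

def idxList (n : ℕ) (p : Pat n) : List (Fin (2 * n + 1)) :=
  (List.finRange n).flatMap fun j => idxF n j (p j)

def blade (n : ℕ) (p : Pat n) : E n := P n (idxList n p)

lemma xIdx_inj {j j' : Fin n} : xIdx n j = xIdx n j' ↔ j = j' := by
  simp [xIdx, Fin.ext_iff]

lemma yIdx_inj {j j' : Fin n} : yIdx n j = yIdx n j' ↔ j = j' := by
  simp [yIdx, Fin.ext_iff]

lemma xIdx_ne_yIdx {j j' : Fin n} : xIdx n j ≠ yIdx n j' := by
  intro h
  have h2 : (j : ℕ) = n + (j' : ℕ) := congrArg Fin.val h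
  have := j.2; omega

lemma mem_idxF {a : Fin (2 * n + 1)} {j : Fin n} {c : Fin 4} :
    a ∈ idxF n j c ↔ (a = xIdx n j ∧ (c = 1 ∨ c = 3)) ∨ (a = yIdx n j ∧ (c = 2 ∨ c = 3)) := by
  fin_cases c <;> simp [idxF] <;> tauto

lemma idxF_length (j : Fin n) (c : Fin 4) : (idxF n j c).length = wt c := by
  fin_cases c <;> simp [idxF, wt]

lemma idxF_nodup (j : Fin n) (c : Fin 4) : (idxF n j c).Nodup := by
  fin_cases c <;> simp [idxF, xIdx_ne_yIdx]

lemma mem_idxList {a : Fin (2 * n + 1)} {p : Pat n} :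
    a ∈ idxList n p ↔ ∃ j : Fin n,
      (a = xIdx n j ∧ (p j = 1 ∨ p j = 3)) ∨ (a = yIdx n j ∧ (p j = 2 ∨ p j = 3)) := by
  simp [idxList, List.mem_flatMap, mem_idxF, List.mem_finRange]

lemma idxList_nodup (p : Pat n) : (idxList n p).Nodup := by
  refine List.nodup_flatMap.mpr ⟨fun j _ => idxF_nodup j (p j), ?_⟩
  refine List.Pairwise.imp ?_ (List.nodup_finRange n)
  intro j j' hne
  rw [Function.onFun, List.disjoint_left]
  intro a ha ha'
  rcases mem_idxF.mp ha with ⟨rfl, _⟩ | ⟨rfl, _⟩ <;>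
    rcases mem_idxF.mp ha' with ⟨e, _⟩ | ⟨e, _⟩
  · exact hne (xIdx_inj.mp e)
  · exact xIdx_ne_yIdx e
  · exact xIdx_ne_yIdx e.symm
  · exact hne (yIdx_inj.mp e)

lemma idxList_length (p : Pat n) : (idxList n p).length = w n p := by
  rw [idxList, List.length_flatMap, w, Fin.sum_univ_def]
  simp [Function.comp_def, idxF_length]

lemma pat_eq_of_idxList_eq {p q : Pat n}
    (h : ∀ a, a ∈ idxList n p ↔ a ∈ idxList n q) : p = q := by
  funext j
  have hx : (p j = 1 ∨ p j = 3) ↔ (q j = 1 ∨ q j = 3) := by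
    constructor <;> intro hc
    · rcases mem_idxList.mp ((h (xIdx n j)).mp (mem_idxList.mpr ⟨j, Or.inl ⟨rfl, hc⟩⟩)) with
        ⟨j', ⟨e, hc'⟩ | ⟨e, hc'⟩⟩
      · cases xIdx_inj.mp e; exact hc'
      · exact absurd e xIdx_ne_yIdx
    · rcases mem_idxList.mp ((h (xIdx n j)).mpr (mem_idxList.mpr ⟨j, Or.inl ⟨rfl, hc⟩⟩)) with
        ⟨j', ⟨e, hc'⟩ | ⟨e, hc'⟩⟩
      · cases xIdx_inj.mp e; exact hc'
      · exact absurd e xIdx_ne_yIdx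
  have hy : (p j = 2 ∨ p j = 3) ↔ (q j = 2 ∨ q j = 3) := by
    constructor <;> intro hc
    · rcases mem_idxList.mp ((h (yIdx n j)).mp (mem_idxList.mpr ⟨j, Or.inr ⟨rfl, hc⟩⟩)) with
        ⟨j', ⟨e, hc'⟩ | ⟨e, hc'⟩⟩
      · exact absurd e.symm xIdx_ne_yIdx
      · cases yIdx_inj.mp e; exact hc'
    · rcases mem_idxList.mp ((h (yIdx n j)).mpr (mem_idxList.mpr ⟨j, Or.inr ⟨rfl, hc⟩⟩)) with
        ⟨j', ⟨e, hc'⟩ | ⟨e, hc'⟩⟩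
      · exact absurd e.symm xIdx_ne_yIdx
      · cases yIdx_inj.mp e; exact hc'
  revert hx hy
  generalize p j = c; generalize q j = c'
  fin_cases c <;> fin_cases c' <;> decide

/-- the sorted monomial attached to a pattern -/
def sortedList (n : ℕ) (p : Pat n) : List (Fin (2 * n + 1)) :=
  (idxList n p).toFinset.sort (· ≤ ·)

lemma sortedList_perm (p : Pat n) : (idxList n p).Perm (sortedList n p) :=
  List.perm_of_nodup_nodup_toFinset_eq (idxList_nodup p) (Finset.sort_nodup _ _)
    (by simp [sortedList])

lemma blade_eq_sorted (p : Pat n) :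
    P n (sortedList n p) = blade n p ∨ P n (sortedList n p) = -blade n p :=
  P_perm (sortedList_perm p)

lemma sortedList_length (p : Pat n) : (sortedList n p).length = w n p := by
  rw [sortedList, Finset.length_sort, List.toFinset_card_of_nodup (idxList_nodup p),
    idxList_length]

lemma sortedList_inj {p q : Pat n} (h : sortedList n p = sortedList n q) : p = q := by
  apply pat_eq_of_idxList_eq
  intro a
  rw [← List.mem_toFinset, ← List.mem_toFinset (l := idxList n q),
    ← Finset.mem_sort (· ≤ ·), ← Finset.mem_sort (· ≤ ·), ← sortedList, ← sortedList, h]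

/-! ### Independence of blades -/

lemma blade_indep {k : ℕ} {c : Mdl n} (hc : ∀ p, c p ≠ 0 → w n p = k)
    (h : ∑ p : Pat n, c p • blade n p = 0) (q : Pat n) : c q = 0 := by
  by_cases hq : c q = 0
  · exact hq
  exfalso
  set lam : E n →ₗ[ℝ] ℝ :=
    (ExteriorAlgebra.algebraMapInv (M := DualW n)).toLinearMap ∘ₗ Cmap n (sortedList n q) with hlam
  have h0 : ∑ p : Pat n, c p • lam (blade n p) = 0 := by
    have := congrArg lam h
    simpa [map_sum, map_smul] using this
  have hval : ∀ p ∈ Finset.univ (α := Pat n), p ≠ q → c p • lam (blade n p) = 0 := by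
    intro p _ hpq
    by_cases hcp : c p = 0
    · simp [hcp]
    have hlen : (sortedList n q).length = (sortedList n p).length := by
      rw [sortedList_length, sortedList_length, hc p hcp, hc q hq]
    have hne : sortedList n q ≠ sortedList n p := fun e => hpq (sortedList_inj e.symm)
    have horth := ortho (n := n) (sortedList n q) (sortedList n p)
      (Finset.sortedLT_sort _).pairwise (Finset.sortedLT_sort _).pairwise hlen
    rw [if_neg hne] at horth
    rcases blade_eq_sorted (n := n) p with e | e
    · have hz : lam (blade n p) = 0 := by rw [← e]; exact horth
      simp [hz]
    · have hz : lam (blade n p) = 0 := by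
        have h2 : lam (-blade n p) = 0 := by rw [← e]; exact horth
        rw [map_neg, neg_eq_zero] at h2; exact h2
      simp [hz]
  have hsum := Finset.sum_eq_single_of_mem q (Finset.mem_univ q) hval
  rw [hsum] at h0
  have horth := ortho (n := n) (sortedList n q) (sortedList n q)
    (Finset.sortedLT_sort _).pairwise (Finset.sortedLT_sort _).pairwise rfl
  rw [if_pos rfl] at horth
  rcases blade_eq_sorted (n := n) q with e | e
  · have hz : lam (blade n q) = 1 := by rw [← e]; exact horth
    rw [hz, smul_eq_mul, mul_one] at h0; exact hq h0
  · have hz : lam (blade n q) = -1 := by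
      have h2 : lam (-blade n q) = 1 := by rw [← e]; exact horth
      rw [map_neg] at h2; linarith
    rw [hz, smul_eq_mul] at h0
    apply hq; linarith

/-! ### The linear map `Phi` and weight subspaces -/

def Phi (n : ℕ) : Mdl n →ₗ[ℝ] E n where
  toFun f := ∑ p : Pat n, f p • blade n p
  map_add' f g := by simp [add_smul, Finset.sum_add_distrib]
  map_smul' a f := by simp [Finset.smul_sum, smul_smul]

lemma Phi_apply (f : Mdl n) : Phi n f = ∑ p : Pat n, f p • blade n p := rfl

lemma Phi_single (p : Pat n) : Phi n (Pi.single p 1) = blade n p := by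
  rw [Phi_apply]
  rw [Finset.sum_eq_single_of_mem p (Finset.mem_univ p)
    (fun q _ hqp => by simp [Pi.single_apply, hqp])]
  simp

def W (n k : ℕ) : Submodule ℝ (Mdl n) where
  carrier := {f | ∀ p, w n p ≠ k → f p = 0}
  add_mem' := fun ha hb p hp => by
    simp only [Pi.add_apply]; rw [ha p hp, hb p hp, add_zero]
  zero_mem' := fun p _ => rfl
  smul_mem' := fun a f hf p hp => by
    simp only [Pi.smul_apply]; rw [hf p hp, smul_zero]

lemma mem_W {k : ℕ} {f : Mdl n} : f ∈ W n k ↔ ∀ p, w n p ≠ k → f p = 0 := Iff.rfl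

lemma Phi_inj_W {k : ℕ} {f : Mdl n} (hf : f ∈ W n k) (h : Phi n f = 0) : f = 0 := by
  funext q
  rw [Pi.zero_apply]
  refine blade_indep (k := k) (fun p hp => ?_) (by rw [← Phi_apply]; exact h) q
  by_contra hw
  exact hp (hf p hw)

/-! ### Correspondence with the `dx_I ∧ dy_J` generators -/

def pat (n : ℕ) (I J : Finset (Fin n)) : Pat n := fun j =>
  if j ∈ I then (if j ∈ J then 3 else 1) else (if j ∈ J then 2 else 0)

def mList (n : ℕ) (I J : Finset (Fin n)) : List (Fin (2 * n + 1)) :=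
  ((I.sort (· ≤ ·)).map (xIdx n)) ++ ((J.sort (· ≤ ·)).map (yIdx n))

lemma wedge_eq_P (I J : Finset (Fin n)) :
    wedgeOf n (dX n) I * wedgeOf n (dY n) J = P n (mList n I J) := by
  rw [mList, P_append]
  congr 1 <;>
  · rw [P, List.map_map, wedgeOf]
    rfl

lemma mem_mList {a : Fin (2 * n + 1)} {I J : Finset (Fin n)} :
    a ∈ mList n I J ↔ (∃ j ∈ I, a = xIdx n j) ∨ (∃ j ∈ J, a = yIdx n j) := by
  simp [mList, List.mem_append, List.mem_map, Finset.mem_sort, eq_comm]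

lemma mList_nodup (I J : Finset (Fin n)) : (mList n I J).Nodup := by
  rw [mList]
  refine List.Nodup.append ?_ ?_ ?_
  · exact (Finset.sort_nodup _ _).map (fun a b e => xIdx_inj.mp e)
  · exact (Finset.sort_nodup _ _).map (fun a b e => yIdx_inj.mp e)
  · intro a ha hb
    rcases List.mem_map.mp ha with ⟨j, _, rfl⟩
    rcases List.mem_map.mp hb with ⟨j', _, e⟩
    exact xIdx_ne_yIdx e.symm

lemma pat_mem_one {I J : Finset (Fin n)} {j : Fin n} :
    (pat n I J j = 1 ∨ pat n I J j = 3) ↔ j ∈ I := by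
  by_cases hI : j ∈ I <;> by_cases hJ : j ∈ J <;> simp [pat, hI, hJ]

lemma pat_mem_two {I J : Finset (Fin n)} {j : Fin n} :
    (pat n I J j = 2 ∨ pat n I J j = 3) ↔ j ∈ J := by
  by_cases hI : j ∈ I <;> by_cases hJ : j ∈ J <;> simp [pat, hI, hJ]

lemma mList_perm (I J : Finset (Fin n)) :
    (idxList n (pat n I J)).Perm (mList n I J) := by
  refine List.perm_of_nodup_nodup_toFinset_eq (idxList_nodup _) (mList_nodup I J) ?_
  ext a
  rw [List.mem_toFinset, List.mem_toFinset, mem_mList, mem_idxList]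
  constructor
  · rintro ⟨j, ⟨rfl, hc⟩ | ⟨rfl, hc⟩⟩
    · exact Or.inl ⟨j, pat_mem_one.mp hc, rfl⟩
    · exact Or.inr ⟨j, pat_mem_two.mp hc, rfl⟩
  · rintro (⟨j, hj, rfl⟩ | ⟨j, hj, rfl⟩)
    · exact ⟨j, Or.inl ⟨rfl, pat_mem_one.mpr hj⟩⟩
    · exact ⟨j, Or.inr ⟨rfl, pat_mem_two.mpr hj⟩⟩

lemma w_pat (I J : Finset (Fin n)) : w n (pat n I J) = I.card + J.card := by
  have key : ∀ j : Fin n, wt (pat n I J j)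
      = (if j ∈ I then 1 else 0) + (if j ∈ J then 1 else 0) := by
    intro j
    by_cases hI : j ∈ I <;> by_cases hJ : j ∈ J <;> simp [pat, wt, hI, hJ]
  rw [w, Finset.sum_congr rfl (fun j _ => key j), Finset.sum_add_distrib]
  congr 1 <;> simp [Finset.sum_ite_mem]

/-- `wedge I J = ± blade (pat I J)` -/
lemma wedge_blade (I J : Finset (Fin n)) : ∃ ε : ℝ, (ε = 1 ∨ ε = -1) ∧
    wedgeOf n (dX n) I * wedgeOf n (dY n) J = ε • blade n (pat n I J) := by
  rcases P_perm (mList_perm I J) with e | e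
  · exact ⟨1, Or.inl rfl, by rw [wedge_eq_P, e, one_smul]; rfl⟩
  · exact ⟨-1, Or.inr rfl, by rw [wedge_eq_P, e]; simp [blade]⟩

def patI (n : ℕ) (p : Pat n) : Finset (Fin n) :=
  Finset.univ.filter (fun j => p j = 1 ∨ p j = 3)

def patJ (n : ℕ) (p : Pat n) : Finset (Fin n) :=
  Finset.univ.filter (fun j => p j = 2 ∨ p j = 3)

lemma pat_patIJ (p : Pat n) : pat n (patI n p) (patJ n p) = p := by
  funext j
  have hdec : ∀ c : Fin 4,
      (if (c = 1 ∨ c = 3) then (if (c = 2 ∨ c = 3) then (3 : Fin 4) else 1)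
        else (if (c = 2 ∨ c = 3) then 2 else 0)) = c := by decide
  simpa [pat, patI, patJ, Finset.mem_filter] using hdec (p j)

lemma card_patIJ (p : Pat n) : (patI n p).card + (patJ n p).card = w n p := by
  have key : ∀ c : Fin 4,
      (if (c = 1 ∨ c = 3) then 1 else 0) + (if (c = 2 ∨ c = 3) then 1 else 0) = wt c := by
    decide
  rw [patI, patJ, Finset.card_filter, Finset.card_filter, w, ← Finset.sum_add_distrib]
  exact Finset.sum_congr rfl (fun j _ => key (p j))

lemma horiz_eq (k : ℕ) : horiz n k = Submodule.map (Phi n) (W n k) := by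
  apply le_antisymm
  · rw [horiz, Submodule.span_le]
    rintro z ⟨I, J, hcard, rfl⟩
    rcases wedge_blade I J with ⟨ε, _, he⟩
    rw [he]
    refine Submodule.smul_mem _ _ ?_
    refine ⟨Pi.single (pat n I J) 1, ?_, Phi_single _⟩
    intro p hp
    rcases eq_or_ne p (pat n I J) with rfl | hne
    · exact absurd (by rw [w_pat, hcard]) hp
    · exact Pi.single_eq_of_ne hne 1
  · rintro z ⟨f, hf, rfl⟩
    rw [Phi_apply]
    refine Submodule.sum_mem _ (fun p _ => ?_)
    by_cases hfp : f p = 0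
    · simp [hfp]
    refine Submodule.smul_mem _ _ ?_
    have hw : w n p = k := by by_contra hw; exact hfp (hf p hw)
    rcases wedge_blade (patI n p) (patJ n p) with ⟨ε, hε, he⟩
    rw [pat_patIJ] at he
    have hbl : blade n p = ε • (wedgeOf n (dX n) (patI n p) * wedgeOf n (dY n) (patJ n p)) := by
      rcases hε with rfl | rfl <;> rw [he] <;> simp
    rw [hbl]
    refine Submodule.smul_mem _ _ (Submodule.subset_span ?_)
    exact ⟨patI n p, patJ n p, by rw [card_patIJ, hw], rfl⟩

/-! ### Multiplication by `ω` on blades -/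

lemma gen_aba (i i' : Fin (2 * n + 1)) : (gen n i * gen n i') * gen n i = 0 := by
  rw [mul_assoc, gen_swap i' i, mul_neg, ← mul_assoc, gen_sq, zero_mul, neg_zero]

lemma gen_abb (i i' : Fin (2 * n + 1)) : (gen n i * gen n i') * gen n i' = 0 := by
  rw [mul_assoc, gen_sq, mul_zero]

lemma blade_split (p : Pat n) (j : Fin n) : ∃ A B : List (Fin (2 * n + 1)),
    ∀ c : Fin 4, idxList n (Function.update p j c) = A ++ (idxF n j c ++ B) := by
  obtain ⟨l₁, l₂, hsplit⟩ := List.append_of_mem (List.mem_finRange j)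
  have hnd := List.nodup_finRange n
  rw [hsplit] at hnd
  obtain ⟨hnd1, hnd2, hdisj⟩ := List.nodup_append'.mp hnd
  have hj1 : j ∉ l₁ := fun hm => hdisj hm List.mem_cons_self
  have hj2 : j ∉ l₂ := (List.nodup_cons.mp hnd2).1
  refine ⟨l₁.flatMap (fun j' => idxF n j' (p j')), l₂.flatMap (fun j' => idxF n j' (p j')), ?_⟩
  intro c
  rw [idxList, hsplit, List.flatMap_append, List.flatMap_cons, Function.update_self]
  congr 1
  · exact List.flatMap_congr (fun j' hj' =>
      by rw [Function.update_of_ne (fun e => hj1 (by rw [← e]; exact hj'))])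
  · congr 1
    exact List.flatMap_congr (fun j' hj' =>
      by rw [Function.update_of_ne (fun e => hj2 (by rw [← e]; exact hj'))])

lemma pair_mul_idxF (j : Fin n) (c : Fin 4) :
    (gen n (xIdx n j) * gen n (yIdx n j)) * P n (idxF n j c)
      = if c = 0 then P n (idxF n j 3) else 0 := by
  fin_cases c
  · simp [idxF, P_nil, P_cons, mul_one]
  · simpa [idxF, P_cons, P_nil] using gen_aba (xIdx n j) (yIdx n j)
  · simpa [idxF, P_cons, P_nil] using gen_abb (xIdx n j) (yIdx n j)
  · have h := gen_aba (xIdx n j) (yIdx n j)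
    have e : idxF n j (⟨3, by norm_num⟩ : Fin 4) = [xIdx n j, yIdx n j] := by simp [idxF]
    rw [if_neg (by decide), e, P_cons, P_cons, P_nil, mul_one, ← mul_assoc, h, zero_mul]

lemma mul_pair_blade (p : Pat n) (j : Fin n) :
    (dX n j * dY n j) * blade n p
      = if p j = 0 then blade n (Function.update p j 3) else 0 := by
  obtain ⟨A, B, hAB⟩ := blade_split p j
  have hp : idxList n p = A ++ (idxF n j (p j) ++ B) := by
    have h := hAB (p j); rwa [Function.update_eq_self] at h
  have hdxy : dX n j * dY n j = gen n (xIdx n j) * gen n (yIdx n j) := rfl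
  have key : (dX n j * dY n j) * blade n p
      = P n A * (((gen n (xIdx n j) * gen n (yIdx n j)) * P n (idxF n j (p j))) * P n B) := by
    rw [blade, hp, P_append, P_append, hdxy, ← mul_assoc, pair_comm_P A, mul_assoc,
      ← mul_assoc (gen n (xIdx n j) * gen n (yIdx n j))]
  rw [key, pair_mul_idxF]
  by_cases h0 : p j = 0
  · rw [if_pos h0, if_pos h0, blade, hAB 3, P_append, P_append]
  · rw [if_neg h0, if_neg h0, zero_mul, mul_zero]

/-! ### The model maps `L` and `D` -/

def Lmap (n : ℕ) : Mdl n →ₗ[ℝ] Mdl n where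
  toFun f := fun q => ∑ j ∈ Finset.univ.filter (fun j => q j = 3), f (Function.update q j 0)
  map_add' f g := by funext q; simp [Finset.sum_add_distrib]
  map_smul' a f := by funext q; simp [Finset.mul_sum]

def Dmap (n : ℕ) : Mdl n →ₗ[ℝ] Mdl n where
  toFun f := fun p => ∑ j ∈ Finset.univ.filter (fun j => p j = 0), f (Function.update p j 3)
  map_add' f g := by funext q; simp [Finset.sum_add_distrib]
  map_smul' a f := by funext q; simp [Finset.mul_sum]

lemma Lmap_apply (f : Mdl n) (q : Pat n) :
    Lmap n f q = ∑ j ∈ Finset.univ.filter (fun j => q j = 3), f (Function.update q j 0) := rfl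

lemma Dmap_apply (f : Mdl n) (p : Pat n) :
    Dmap n f p = ∑ j ∈ Finset.univ.filter (fun j => p j = 0), f (Function.update p j 3) := rfl

lemma sum_reindex {M : Type*} [AddCommMonoid M] (F : Pat n → Fin n → M) :
    ∑ p : Pat n, ∑ j ∈ Finset.univ.filter (fun j => p j = 0), F p j
      = ∑ q : Pat n, ∑ j ∈ Finset.univ.filter (fun j => q j = 3), F (Function.update q j 0) j := by
  rw [Finset.sum_sigma', Finset.sum_sigma']
  refine Finset.sum_nbij' (fun x => ⟨Function.update x.1 x.2 3, x.2⟩)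
    (fun x => ⟨Function.update x.1 x.2 0, x.2⟩) ?_ ?_ ?_ ?_ ?_
  · rintro ⟨p, j⟩ hm
    rw [Finset.mem_sigma] at hm ⊢
    exact ⟨Finset.mem_univ _, Finset.mem_filter.mpr ⟨Finset.mem_univ _, Function.update_self _ _ _⟩⟩
  · rintro ⟨q, j⟩ hm
    rw [Finset.mem_sigma] at hm ⊢
    exact ⟨Finset.mem_univ _, Finset.mem_filter.mpr ⟨Finset.mem_univ _, Function.update_self _ _ _⟩⟩
  · rintro ⟨p, j⟩ hm
    rw [Finset.mem_sigma] at hm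
    have h0 : p j = 0 := (Finset.mem_filter.mp hm.2).2
    simp only [Sigma.mk.inj_iff, heq_eq_eq]
    exact ⟨by rw [Function.update_idem, update_self_of_eq h0], trivial⟩
  · rintro ⟨q, j⟩ hm
    rw [Finset.mem_sigma] at hm
    have h3 : q j = 3 := (Finset.mem_filter.mp hm.2).2
    simp only [Sigma.mk.inj_iff, heq_eq_eq]
    exact ⟨by rw [Function.update_idem, update_self_of_eq h3], trivial⟩
  · rintro ⟨p, j⟩ hm
    rw [Finset.mem_sigma] at hm
    have h0 : p j = 0 := (Finset.mem_filter.mp hm.2).2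
    simp only
    rw [Function.update_idem, update_self_of_eq h0]

lemma omega_mul_Phi (f : Mdl n) : omega' n * Phi n f = (4 : ℝ) • Phi n (Lmap n f) := by
  rw [omega', Phi_apply, smul_mul_assoc]
  congr 1
  calc (∑ j : Fin n, dX n j * dY n j) * ∑ p : Pat n, f p • blade n p
      = ∑ p : Pat n, ∑ j : Fin n, f p • ((dX n j * dY n j) * blade n p) := by
        rw [Finset.sum_mul_sum]
        rw [Finset.sum_comm]
        exact Finset.sum_congr rfl fun p _ => Finset.sum_congr rfl fun j _ =>
          (mul_smul_comm _ _ _)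
    _ = ∑ p : Pat n, ∑ j ∈ Finset.univ.filter (fun j => p j = 0),
          f p • blade n (Function.update p j 3) := by
        refine Finset.sum_congr rfl fun p _ => ?_
        rw [Finset.sum_filter]
        refine Finset.sum_congr rfl fun j _ => ?_
        rw [mul_pair_blade]
        by_cases h0 : p j = 0 <;> simp [h0]
    _ = ∑ q : Pat n, ∑ j ∈ Finset.univ.filter (fun j => q j = 3),
          f (Function.update q j 0) • blade n q := by
        rw [sum_reindex (F := fun p j => f p • blade n (Function.update p j 3))]
        refine Finset.sum_congr rfl fun q _ => Finset.sum_congr rfl fun j hj => ?_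
        have h3 : q j = 3 := (Finset.mem_filter.mp hj).2
        rw [Function.update_idem, update_self_of_eq h3]
    _ = ∑ q : Pat n, (Lmap n f q) • blade n q := by
        refine Finset.sum_congr rfl fun q _ => ?_
        rw [Lmap_apply, Finset.sum_smul]
    _ = Phi n (Lmap n f) := (Phi_apply _).symm

/-! ### Inner product and the commutator identity -/

def ip (f g : Mdl n) : ℝ := ∑ p : Pat n, f p * g p

lemma ip_comm (f g : Mdl n) : ip f g = ip g f := by
  unfold ip; exact Finset.sum_congr rfl fun p _ => mul_comm _ _

lemma ip_adj (f g : Mdl n) : ip (Lmap n f) g = ip f (Dmap n g) := by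
  unfold ip
  have lhs : ∑ q : Pat n, Lmap n f q * g q
      = ∑ q : Pat n, ∑ j ∈ Finset.univ.filter (fun j => q j = 3),
          f (Function.update q j 0) * g q := by
    refine Finset.sum_congr rfl fun q _ => ?_
    rw [Lmap_apply, Finset.sum_mul]
  have rhs : ∑ p : Pat n, f p * Dmap n g p
      = ∑ p : Pat n, ∑ j ∈ Finset.univ.filter (fun j => p j = 0),
          f p * g (Function.update p j 3) := by
    refine Finset.sum_congr rfl fun p _ => ?_
    rw [Dmap_apply, Finset.mul_sum]
  rw [lhs, rhs, sum_reindex (F := fun p j => f p * g (Function.update p j 3))]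
  refine Finset.sum_congr rfl fun q _ => Finset.sum_congr rfl fun j hj => ?_
  have h3 : q j = 3 := (Finset.mem_filter.mp hj).2
  rw [Function.update_idem, update_self_of_eq h3]

lemma comm_pt (f : Mdl n) (p : Pat n) :
    Dmap n (Lmap n f) p + ((Finset.univ.filter (fun j => p j = 3)).card : ℝ) * f p
      = Lmap n (Dmap n f) p + ((Finset.univ.filter (fun j => p j = 0)).card : ℝ) * f p := by
  classical
  set A := Finset.univ.filter (fun j => p j = 0) with hA
  set B := Finset.univ.filter (fun j => p j = 3) with hB
  have hmemA : ∀ j ∈ A, p j = 0 := fun j hj => (Finset.mem_filter.mp hj).2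
  have hmemB : ∀ j ∈ B, p j = 3 := fun j hj => (Finset.mem_filter.mp hj).2
  have hAnotB : ∀ j ∈ A, j ∉ B := fun j hj hjB => by
    have := hmemA j hj; have := hmemB j hjB; simp_all
  have hBnotA : ∀ j ∈ B, j ∉ A := fun j hj hjA => by
    have := hmemA j hjA; have := hmemB j hj; simp_all
  have hD : Dmap n (Lmap n f) p
      = (A.card : ℝ) * f p + ∑ j ∈ A, ∑ k ∈ B, f (Function.update (Function.update p j 3) k 0) := by
    rw [Dmap_apply, ← hA]
    have inner : ∀ j ∈ A, Lmap n f (Function.update p j 3)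
        = f p + ∑ k ∈ B, f (Function.update (Function.update p j 3) k 0) := by
      intro j hj
      rw [Lmap_apply]
      have hfilter : Finset.univ.filter (fun k => Function.update p j 3 k = 3) = insert j B := by
        ext k
        rcases eq_or_ne k j with rfl | hkj
        · simp [Function.update_self]
        · simp [Function.update_of_ne hkj, hB, hkj]
      rw [hfilter, Finset.sum_insert (hAnotB j hj)]
      congr 1
      rw [Function.update_idem, update_self_of_eq (hmemA j hj)]
    rw [Finset.sum_congr rfl inner, Finset.sum_add_distrib, Finset.sum_const, nsmul_eq_mul]
  have hL : Lmap n (Dmap n f) p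
      = (B.card : ℝ) * f p + ∑ k ∈ B, ∑ j ∈ A, f (Function.update (Function.update p k 0) j 3) := by
    rw [Lmap_apply, ← hB]
    have inner : ∀ k ∈ B, Dmap n f (Function.update p k 0)
        = f p + ∑ j ∈ A, f (Function.update (Function.update p k 0) j 3) := by
      intro k hk
      rw [Dmap_apply]
      have hfilter : Finset.univ.filter (fun j => Function.update p k 0 j = 0) = insert k A := by
        ext j
        rcases eq_or_ne j k with rfl | hjk
        · simp [Function.update_self]
        · simp [Function.update_of_ne hjk, hA, hjk]
      rw [hfilter, Finset.sum_insert (hBnotA k hk)]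
      congr 1
      rw [Function.update_idem, update_self_of_eq (hmemB k hk)]
    rw [Finset.sum_congr rfl inner, Finset.sum_add_distrib, Finset.sum_const, nsmul_eq_mul]
  have hcross : ∑ j ∈ A, ∑ k ∈ B, f (Function.update (Function.update p j 3) k 0)
      = ∑ k ∈ B, ∑ j ∈ A, f (Function.update (Function.update p k 0) j 3) := by
    rw [Finset.sum_comm]
    refine Finset.sum_congr rfl fun k hk => Finset.sum_congr rfl fun j hj => ?_
    have hjk : j ≠ k := fun e => hAnotB j hj (e ▸ hk)
    rw [Function.update_comm hjk]
  rw [hD, hL, hcross]; ring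

/-! ### Weights under updates; `L` maps `W (n-1)` to `W (n+1)` -/

lemma w_update (q : Pat n) (j : Fin n) (c : Fin 4) :
    w n (Function.update q j c) + wt (q j) = w n q + wt c := by
  have h1 : ∀ x, wt (Function.update q j c x)
      = Function.update (fun y => wt (q y)) j (wt c) x := by
    intro x
    rcases eq_or_ne x j with rfl | hx
    · simp
    · simp [Function.update_of_ne hx]
  have h2 : w n (Function.update q j c)
      = wt c + ∑ x ∈ Finset.univ.erase j, wt (q x) := by
    rw [w, Finset.sum_congr rfl (fun x _ => h1 x), Finset.sum_update_of_mem (Finset.mem_univ j)]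
    congr 1
    apply Finset.sum_congr _ (fun _ _ => rfl)
    ext x; simp [Finset.mem_erase, and_comm]
  have h3 : w n q = wt (q j) + ∑ x ∈ Finset.univ.erase j, wt (q x) :=
    (Finset.add_sum_erase _ _ (Finset.mem_univ j)).symm
  omega

lemma card_w (p : Pat n) :
    (Finset.univ.filter (fun j => p j = 0)).card + w n p
      = n + (Finset.univ.filter (fun j => p j = 3)).card := by
  have key : ∀ c : Fin 4,
      ((if c = 0 then 1 else 0) : ℕ) + wt c = 1 + (if c = 3 then 1 else 0) := by decide
  have h := Finset.sum_congr rfl (fun j (_ : j ∈ Finset.univ) => key (p j))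
  rw [Finset.sum_add_distrib, Finset.sum_add_distrib] at h
  have hn' : ∑ _j : Fin n, (1 : ℕ) = n := by simp
  rw [Finset.card_filter, Finset.card_filter, w, h, hn']

lemma Lmap_mem_W (hn : 1 ≤ n) {f : Mdl n} (hf : f ∈ W n (n - 1)) :
    Lmap n f ∈ W n (n + 1) := by
  intro q hq
  rw [Lmap_apply]
  refine Finset.sum_eq_zero fun j hj => ?_
  have hj3 : q j = 3 := (Finset.mem_filter.mp hj).2
  apply hf
  intro hwu
  have hw := w_update q j 0
  rw [hj3] at hw
  have hwt3 : wt 3 = 2 := rfl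
  have hwt0 : wt (0 : Fin 4) = 0 := rfl
  rw [hwt3, hwt0] at hw
  omega

/-! ### Injectivity of `L` on `W (n-1)` -/

lemma Lmap_inj (hn : 1 ≤ n) {f : Mdl n} (hf : f ∈ W n (n - 1)) (h : Lmap n f = 0) :
    f = 0 := by
  have h1 : ip (n := n) f (Dmap n (Lmap n f)) = 0 := by
    rw [← ip_adj, h]
    simp [ip]
  have h2 : ∑ p : Pat n, f p * Dmap n (Lmap n f) p
        + ∑ p : Pat n, ((Finset.univ.filter (fun j => p j = 3)).card : ℝ) * (f p * f p)
      = ∑ p : Pat n, f p * Lmap n (Dmap n f) p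
        + ∑ p : Pat n, ((Finset.univ.filter (fun j => p j = 0)).card : ℝ) * (f p * f p) := by
    rw [← Finset.sum_add_distrib, ← Finset.sum_add_distrib]
    refine Finset.sum_congr rfl fun p _ => ?_
    have e := comm_pt f p
    linear_combination f p * e
  have h3 : ∑ p : Pat n, ((Finset.univ.filter (fun j => p j = 0)).card : ℝ) * (f p * f p)
      = ∑ p : Pat n, ((Finset.univ.filter (fun j => p j = 3)).card : ℝ) * (f p * f p)
        + ∑ p : Pat n, f p * f p := by
    rw [← Finset.sum_add_distrib]
    refine Finset.sum_congr rfl fun p _ => ?_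
    by_cases hfp : f p = 0
    · simp [hfp]
    · have hw : w n p = n - 1 := by by_contra hw; exact hfp (hf p hw)
      have hc := card_w p
      rw [hw] at hc
      have : (Finset.univ.filter (fun j => p j = 0)).card
          = (Finset.univ.filter (fun j => p j = 3)).card + 1 := by omega
      rw [this]
      push_cast
      ring
  have h4 : ip (n := n) f (Lmap n (Dmap n f)) = ip (n := n) (Dmap n f) (Dmap n f) := by
    rw [ip_comm, ip_adj]
  have h5 : (0 : ℝ) = ip (n := n) (Dmap n f) (Dmap n f) + ∑ p : Pat n, f p * f p := by
    have hip1 : ip (n := n) f (Dmap n (Lmap n f))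
        = ∑ p : Pat n, f p * Dmap n (Lmap n f) p := rfl
    have hip2 : ip (n := n) f (Lmap n (Dmap n f))
        = ∑ p : Pat n, f p * Lmap n (Dmap n f) p := rfl
    rw [hip1] at h1
    rw [← hip2, h4] at h2
    rw [h3] at h2
    linarith
  have hDf : 0 ≤ ip (n := n) (Dmap n f) (Dmap n f) :=
    Finset.sum_nonneg fun p _ => mul_self_nonneg _
  have hsum0 : ∑ p : Pat n, f p * f p = 0 := by
    have hge : 0 ≤ ∑ p : Pat n, f p * f p :=
      Finset.sum_nonneg fun p _ => mul_self_nonneg _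
    linarith
  funext q
  have := (Finset.sum_eq_zero_iff_of_nonneg
    (fun p _ => mul_self_nonneg (f p))).mp hsum0 q (Finset.mem_univ q)
  exact mul_self_eq_zero.mp this

/-! ### Equality of dimensions and surjectivity -/

def s0 : Fin 4 → Fin 4 := ![3, 1, 2, 0]

lemma s0_invol : ∀ c, s0 (s0 c) = c := by decide

lemma wt_s0 : ∀ c, wt (s0 c) + wt c = 2 := by decide

def sig (n : ℕ) (p : Pat n) : Pat n := s0 ∘ p

lemma sig_invol (p : Pat n) : sig n (sig n p) = p := funext fun j => s0_invol (p j)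

lemma w_sig (p : Pat n) : w n (sig n p) + w n p = 2 * n := by
  rw [w, w, ← Finset.sum_add_distrib]
  have : ∀ j : Fin n, wt (sig n p j) + wt (p j) = 2 := fun j => wt_s0 (p j)
  rw [Finset.sum_congr rfl fun j _ => this j]
  simp [mul_comm]

def Tmap (n : ℕ) : Mdl n ≃ₗ[ℝ] Mdl n where
  toFun f := f ∘ sig n
  invFun f := f ∘ sig n
  map_add' f g := rfl
  map_smul' a f := rfl
  left_inv f := by funext p; simp [Function.comp, sig_invol]
  right_inv f := by funext p; simp [Function.comp, sig_invol]

lemma Tmap_W (hn : 1 ≤ n) :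
    (W n (n + 1)).map (Tmap n).toLinearMap = W n (n - 1) := by
  apply le_antisymm
  · rintro z ⟨g, hg, rfl⟩
    intro p hp
    show g (sig n p) = 0
    apply hg
    intro hws
    have := w_sig p
    omega
  · intro f hf
    refine ⟨f ∘ sig n, ?_, ?_⟩
    · intro p hp
      show f (sig n p) = 0
      apply hf
      intro hws
      have := w_sig p
      omega
    · show (f ∘ sig n) ∘ sig n = f
      funext p
      simp [Function.comp, sig_invol]

instance : FiniteDimensional ℝ (Mdl n) := inferInstance

lemma finrank_W_eq (hn : 1 ≤ n) :
    Module.finrank ℝ (W n (n - 1)) = Module.finrank ℝ (W n (n + 1)) :=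
  (LinearEquiv.finrank_eq
    (LinearEquiv.ofSubmodules (Tmap n) (W n (n + 1)) (W n (n - 1)) (Tmap_W hn))).symm

def Lr (n : ℕ) (hn : 1 ≤ n) : W n (n - 1) →ₗ[ℝ] W n (n + 1) :=
  (Lmap n).restrict (fun _ hf => Lmap_mem_W hn hf)

lemma Lr_surj (hn : 1 ≤ n) : Function.Surjective (Lr n hn) := by
  rw [← LinearMap.injective_iff_surjective_of_finrank_eq_finrank (finrank_W_eq hn)]
  intro a b hab
  have hval : Lmap n a.1 = Lmap n b.1 := by
    have := congrArg Subtype.val hab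
    simpa [Lr, LinearMap.restrict_apply] using this
  have hz : Lmap n (a.1 - b.1) = 0 := by rw [map_sub, hval, sub_self]
  have hmem : a.1 - b.1 ∈ W n (n - 1) := sub_mem a.2 b.2
  have := Lmap_inj hn hmem hz
  exact Subtype.ext (by rw [← sub_eq_zero]; exact this)

end S9

open S9 in
theorem statement9 (n : ℕ) (hn : 1 ≤ n)
    (η : ExteriorAlgebra ℝ (DualW n))
    -- `η` lies in the span of the `dx_I ∧ dy_J` with `|I| + |J| = n+1`
    (hη : η ∈ horiz n (n + 1)) :
    -- there is a unique `δ` in the span of the `dx_{I'} ∧ dy_{J'}` with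
    -- `|I'| + |J'| = n-1` such that `η = ω' ∧ δ`
    ∃! δ : ExteriorAlgebra ℝ (DualW n),
      δ ∈ horiz n (n - 1) ∧ η = omega' n * δ := by
  classical
  rw [horiz_eq] at hη
  obtain ⟨g, hg, hPhig⟩ := hη
  obtain ⟨fsub, hfsub⟩ := Lr_surj hn ⟨g, hg⟩
  have hLf : Lmap n fsub.1 = g := by
    have := congrArg Subtype.val hfsub
    simpa [Lr, LinearMap.restrict_apply] using this
  have hfW : fsub.1 ∈ W n (n - 1) := fsub.2
  have habs : ∀ f' ∈ W n (n - 1), η = omega' n * Phi n f' → f' = (4 : ℝ)⁻¹ • fsub.1 := by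
    intro f' hf' heq
    have heq2 : omega' n * Phi n f' = omega' n * Phi n ((4 : ℝ)⁻¹ • fsub.1) := by
      rw [← heq, omega_mul_Phi, map_smul, map_smul, smul_smul]
      norm_num
      rw [← hPhig, ← hLf]
    have h4 : (4 : ℝ) • Phi n (Lmap n f')
        = (4 : ℝ) • Phi n (Lmap n ((4 : ℝ)⁻¹ • fsub.1)) := by
      rw [← omega_mul_Phi, ← omega_mul_Phi, heq2]
    have hPhiz : Phi n (Lmap n (f' - (4 : ℝ)⁻¹ • fsub.1)) = 0 := by
      have := smul_right_injective (ExteriorAlgebra ℝ (DualW n)) (by norm_num : (4:ℝ) ≠ 0) h4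
      rw [map_sub, map_sub, this, sub_self]
    have hmem1 : f' - (4 : ℝ)⁻¹ • fsub.1 ∈ W n (n - 1) :=
      sub_mem hf' (Submodule.smul_mem _ _ hfW)
    have hLz : Lmap n (f' - (4 : ℝ)⁻¹ • fsub.1) = 0 :=
      Phi_inj_W (Lmap_mem_W hn hmem1) hPhiz
    have := Lmap_inj hn hmem1 hLz
    rw [sub_eq_zero] at this
    exact this
  refine ⟨Phi n ((4 : ℝ)⁻¹ • fsub.1), ⟨?_, ?_⟩, ?_⟩
  · rw [horiz_eq]
    exact ⟨(4 : ℝ)⁻¹ • fsub.1, Submodule.smul_mem _ _ hfW, rfl⟩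
  · rw [omega_mul_Phi, map_smul, map_smul, smul_smul]
    norm_num
    rw [hLf, hPhig]
  · rintro δ' ⟨hδ'mem, hδ'eq⟩
    rw [horiz_eq] at hδ'mem
    obtain ⟨f', hf', rfl⟩ := hδ'mem
    rw [habs f' hf' hδ'eq]
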